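/- (Lemma 3.1, abstract form) Let f⁰, f¹, ..., fᴺ be a sequence of flows on a finite path set P with delays d : P → ℝ≥0, where for each step n, fⁿ⁺¹ is obtained from fⁿ by removing rate δₙ > 0 from a slowest flow-carrying path of fⁿ. Then T(f⁰) ≥ T(fᴺ) + (∑_{n=0}^{N-1} δₙ)·M(fᴺ). -/

import Mathlib

noncomputable def tot {P : Type*} [Fintype P] (x d : P → ℝ) : ℝ := ∑ p, x p * d p

noncomputable def maxDelay {P : Type*} [Fintype P] (x d : P → ℝ) : ℝ :=
  sSup (d '' {p | 0 < x p})

lemma bdd {P : Type*} [Fintype P] (x d : P → ℝ) : BddAbove (d '' {p | 0 < x p}) :=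
  (Set.toFinite _).bddAbove

lemma le_maxDelay {P : Type*} [Fintype P] {x d : P → ℝ} {p : P} (hp : 0 < x p) :
    d p ≤ maxDelay x d :=
  le_csSup (bdd x d) ⟨p, hp, rfl⟩

lemma maxDelay_mono {P : Type*} [Fintype P] {x y d : P → ℝ} (hd : ∀ p, 0 ≤ d p)
    (h : ∀ p, 0 < y p → 0 < x p) : maxDelay y d ≤ maxDelay x d := by
  rcases Set.eq_empty_or_nonempty {p | 0 < y p} with he | ⟨q, hq⟩
  · simp only [maxDelay, he, Set.image_empty, Real.sSup_empty]
    rcases Set.eq_empty_or_nonempty {p | 0 < x p} with he2 | ⟨r, hr⟩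
    · simp [maxDelay, he2]
    · exact le_trans (hd r) (le_maxDelay hr)
  · exact csSup_le_csSup (bdd x d) ⟨d q, q, hq, rfl⟩
      (Set.image_mono fun p hp => h p hp)

lemma tot_update {P : Type*} [Fintype P] [DecidableEq P] (x d : P → ℝ) (p : P) (v : ℝ) :
    tot (Function.update x p v) d = tot x d - x p * d p + v * d p := by
  unfold tot
  rw [Finset.sum_eq_sum_sdiff_singleton_add (Finset.mem_univ p),
      Finset.sum_eq_sum_sdiff_singleton_add (Finset.mem_univ p) (fun q => x q * d q)]
  rw [Finset.sum_congr rfl (fun q hq => by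
    rw [Function.update_of_ne (by simpa using (Finset.mem_sdiff.mp hq).2)]),
    Function.update_self]
  ring

theorem stmt_7 {P : Type*} [Fintype P] [DecidableEq P]
    (d : P → ℝ) (hd : ∀ p, 0 ≤ d p)
    (N : ℕ) (f : ℕ → P → ℝ) (δ : ℕ → ℝ)
    (hx : ∀ p, 0 ≤ f 0 p)
    (hstep : ∀ n < N, 0 < δ n ∧ ∃ p : P, 0 < f n p ∧ d p = maxDelay (f n) d ∧
      δ n ≤ f n p ∧ f (n + 1) = Function.update (f n) p (f n p - δ n)) :
    tot (f 0) d ≥ tot (f N) d + (∑ n ∈ Finset.range N, δ n) * maxDelay (f N) d := by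
  induction N with
  | zero => simp
  | succ N ih =>
    have ih' := ih (fun n hn => hstep n (hn.trans (Nat.lt_succ_self N)))
    obtain ⟨hδ, p, hp, hdp, hle, hupd⟩ := hstep N (Nat.lt_succ_self N)
    have hsub : ∀ q, 0 < f (N+1) q → 0 < f N q := by
      intro q hq
      rw [hupd] at hq
      by_cases h : q = p
      · subst h; exact lt_of_lt_of_le hδ hle
      · rwa [Function.update_of_ne h] at hq
    have hM : maxDelay (f (N+1)) d ≤ maxDelay (f N) d := maxDelay_mono hd hsub
    have hM0 : 0 ≤ maxDelay (f N) d := le_trans (hd p) (le_maxDelay hp)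
    have htot : tot (f N) d = tot (f (N+1)) d + δ N * maxDelay (f N) d := by
      rw [hupd, tot_update, ← hdp]; ring
    have hS : 0 ≤ ∑ n ∈ Finset.range N, δ n :=
      Finset.sum_nonneg fun n hn => (hstep n ((Finset.mem_range.mp hn).trans (Nat.lt_succ_self N))).1.le
    rw [Finset.sum_range_succ]
    calc tot (f 0) d ≥ tot (f N) d + (∑ n ∈ Finset.range N, δ n) * maxDelay (f N) d := ih'
      _ = tot (f (N+1)) d + δ N * maxDelay (f N) d + (∑ n ∈ Finset.range N, δ n) * maxDelay (f N) d := by rw [htot]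
      _ ≥ tot (f (N+1)) d + δ N * maxDelay (f (N+1)) d + (∑ n ∈ Finset.range N, δ n) * maxDelay (f (N+1)) d := by
          exact add_le_add (add_le_add le_rfl (mul_le_mul_of_nonneg_left hM hδ.le)) (mul_le_mul_of_nonneg_left hM hS)
      _ = tot (f (N+1)) d + (∑ n ∈ Finset.range N, δ n + δ N) * maxDelay (f (N+1)) d := by ring
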